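/- Let $(X_i)_{i\ge1}$ be i.i.d. with $F(x)=1-x^{-\alpha}$, $x\ge1$, $\alpha>0$, and $\bar X_n=\max_{i\le n}X_i$. Let $(n_k)$ be an increasing sequence of natural numbers such that for some $\eta\in(0,1)$, $n_{k+1}-n_k<n_k^\eta$ for all large $k$. For $\rho<0$ set $u_\rho(n)=n^{1/\alpha}(\log n)^{1/\alpha}(\log\log n)^{1/\alpha}(\log\log\log n)^{1/\alpha+\rho}$. Then almost surely $\bar X_{n_k}\ge u_\rho(n_k)$ for infinitely many $k$. -/

import Mathlib

open MeasureTheory ProbabilityTheory Filter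
open scoped ENNReal NNReal

noncomputable def paretoBound (α ρ : ℝ) (n : ℕ) : ℝ :=
  (n : ℝ) ^ (1 / α) * (Real.log n) ^ (1 / α) * (Real.log (Real.log n)) ^ (1 / α) *
    (Real.log (Real.log (Real.log n))) ^ (1 / α + ρ)

namespace ParetoAux

/-- e^(e^e) -/
noncomputable def ee : ℝ := Real.exp (Real.exp (Real.exp 1))

/-- The denominator `x · log x · log log x · log log log x`. -/
noncomputable def D (x : ℝ) : ℝ :=
  x * Real.log x * Real.log (Real.log x) * Real.log (Real.log (Real.log x))

/-- Four-fold logarithm. -/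
noncomputable def G (x : ℝ) : ℝ := Real.log (Real.log (Real.log (Real.log x)))

lemma log_ee_le {x : ℝ} (hx : ee ≤ x) : Real.exp (Real.exp 1) ≤ Real.log x := by
  have h := Real.log_le_log (Real.exp_pos _) hx
  unfold ee at h
  rwa [Real.log_exp] at h

lemma loglog_ee_le {x : ℝ} (hx : ee ≤ x) : Real.exp 1 ≤ Real.log (Real.log x) := by
  have h := Real.log_le_log (Real.exp_pos _) (log_ee_le hx)
  rwa [Real.log_exp] at h

lemma logloglog_ee_le {x : ℝ} (hx : ee ≤ x) : 1 ≤ Real.log (Real.log (Real.log x)) := by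
  have h := Real.log_le_log (Real.exp_pos _) (loglog_ee_le hx)
  rwa [Real.log_exp] at h

lemma one_lt_exp_one : (1 : ℝ) < Real.exp 1 := by
  have := Real.add_one_le_exp (1 : ℝ); linarith

lemma one_le_ee : (1 : ℝ) ≤ ee := by
  have h1 : (0:ℝ) < Real.exp (Real.exp 1) := Real.exp_pos _
  have := Real.add_one_le_exp (Real.exp (Real.exp 1))
  unfold ee; linarith

lemma one_lt_ee : (1 : ℝ) < ee := by
  unfold ee
  have h := Real.add_one_le_exp (Real.exp (Real.exp 1))
  have := Real.exp_pos (Real.exp 1)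
  linarith

lemma one_lt_x {x : ℝ} (hx : ee ≤ x) : 1 < x := lt_of_lt_of_le one_lt_ee hx

lemma one_lt_log {x : ℝ} (hx : ee ≤ x) : 1 < Real.log x := by
  have h2 : Real.exp (Real.exp 1) ≤ Real.log x := log_ee_le hx
  have h3 : (1:ℝ) < Real.exp (Real.exp 1) := by
    have := Real.add_one_le_exp (Real.exp 1)
    have := Real.exp_pos (1:ℝ)
    linarith
  linarith

lemma one_lt_loglog {x : ℝ} (hx : ee ≤ x) : 1 < Real.log (Real.log x) :=
  lt_of_lt_of_le one_lt_exp_one (loglog_ee_le hx)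

lemma D_pos {x : ℝ} (hx : ee ≤ x) : 0 < D x := by
  have h0 : (0:ℝ) < x := lt_trans one_pos (one_lt_x hx)
  have h1 : (0:ℝ) < Real.log x := lt_trans one_pos (one_lt_log hx)
  have h2 : (0:ℝ) < Real.log (Real.log x) := lt_trans one_pos (one_lt_loglog hx)
  have h3 : (0:ℝ) < Real.log (Real.log (Real.log x)) :=
    lt_of_lt_of_le one_pos (logloglog_ee_le hx)
  exact mul_pos (mul_pos (mul_pos h0 h1) h2) h3

lemma one_le_D {x : ℝ} (hx : ee ≤ x) : 1 ≤ D x := by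
  have h0 : (1:ℝ) ≤ x := (one_lt_x hx).le
  have h1 : (1:ℝ) ≤ Real.log x := (one_lt_log hx).le
  have h2 : (1:ℝ) ≤ Real.log (Real.log x) := (one_lt_loglog hx).le
  have h3 : (1:ℝ) ≤ Real.log (Real.log (Real.log x)) := logloglog_ee_le hx
  have h01 : (1:ℝ) ≤ x * Real.log x := le_trans h0 (le_mul_of_one_le_right (by linarith) h1)
  have h02 : (1:ℝ) ≤ x * Real.log x * Real.log (Real.log x) :=
    le_trans h01 (le_mul_of_one_le_right (by linarith) h2)
  exact le_trans h02 (le_mul_of_one_le_right (by linarith) h3)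

lemma log_mono {x y : ℝ} (hx : ee ≤ x) (hxy : x ≤ y) : Real.log x ≤ Real.log y :=
  Real.log_le_log (lt_trans one_pos (one_lt_x hx)) hxy

lemma loglog_mono {x y : ℝ} (hx : ee ≤ x) (hxy : x ≤ y) :
    Real.log (Real.log x) ≤ Real.log (Real.log y) :=
  Real.log_le_log (lt_trans one_pos (one_lt_log hx)) (log_mono hx hxy)

lemma logloglog_mono {x y : ℝ} (hx : ee ≤ x) (hxy : x ≤ y) :
    Real.log (Real.log (Real.log x)) ≤ Real.log (Real.log (Real.log y)) :=
  Real.log_le_log (lt_trans one_pos (one_lt_loglog hx)) (loglog_mono hx hxy)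

lemma D_mono {x y : ℝ} (hx : ee ≤ x) (hxy : x ≤ y) : D x ≤ D y := by
  have h0 : (0:ℝ) < x := lt_trans one_pos (one_lt_x hx)
  have h1 : (0:ℝ) < Real.log x := lt_trans one_pos (one_lt_log hx)
  have h2 : (0:ℝ) < Real.log (Real.log x) := lt_trans one_pos (one_lt_loglog hx)
  have h3 : (0:ℝ) ≤ Real.log (Real.log (Real.log x)) :=
    le_trans one_pos.le (logloglog_ee_le hx)
  have hy : ee ≤ y := le_trans hx hxy
  have hy0 : (0:ℝ) ≤ y := le_trans h0.le hxy
  have hy1 : (0:ℝ) ≤ Real.log y := le_trans h1.le (log_mono hx hxy)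
  have hy2 : (0:ℝ) ≤ Real.log (Real.log y) := le_trans h2.le (loglog_mono hx hxy)
  have ha : x * Real.log x ≤ y * Real.log y :=
    mul_le_mul hxy (log_mono hx hxy) h1.le hy0
  have hb : x * Real.log x * Real.log (Real.log x) ≤ y * Real.log y * Real.log (Real.log y) :=
    mul_le_mul ha (loglog_mono hx hxy) h2.le (mul_nonneg hy0 hy1)
  exact mul_le_mul hb (logloglog_mono hx hxy) h3
    (mul_nonneg (mul_nonneg hy0 hy1) hy2)

lemma hasDerivAt_G {x : ℝ} (hx : ee ≤ x) : HasDerivAt G (D x)⁻¹ x := by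
  have h0 : x ≠ 0 := (lt_trans one_pos (one_lt_x hx)).ne'
  have h1 : Real.log x ≠ 0 := (lt_trans one_pos (one_lt_log hx)).ne'
  have h2 : Real.log (Real.log x) ≠ 0 := (lt_trans one_pos (one_lt_loglog hx)).ne'
  have h3 : Real.log (Real.log (Real.log x)) ≠ 0 :=
    (lt_of_lt_of_le one_pos (logloglog_ee_le hx)).ne'
  have H1 : HasDerivAt Real.log x⁻¹ x := Real.hasDerivAt_log h0
  have H2 : HasDerivAt (fun y => Real.log (Real.log y)) ((Real.log x)⁻¹ * x⁻¹) x :=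
    (Real.hasDerivAt_log h1).comp x H1
  have H3 : HasDerivAt (fun y => Real.log (Real.log (Real.log y)))
      ((Real.log (Real.log x))⁻¹ * ((Real.log x)⁻¹ * x⁻¹)) x :=
    by have := (Real.hasDerivAt_log h2).comp x H2; exact this
  have H4 : HasDerivAt (fun y => Real.log (Real.log (Real.log (Real.log y))))
      ((Real.log (Real.log (Real.log x)))⁻¹ *
        ((Real.log (Real.log x))⁻¹ * ((Real.log x)⁻¹ * x⁻¹))) x :=
    by have := (Real.hasDerivAt_log h3).comp x H3; exact this
  have : (Real.log (Real.log (Real.log x)))⁻¹ *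
      ((Real.log (Real.log x))⁻¹ * ((Real.log x)⁻¹ * x⁻¹)) = (D x)⁻¹ := by
    rw [D, mul_inv, mul_inv, mul_inv]; ring
  rw [← this]; exact H4

lemma slope_bound {x : ℝ} (hx : ee ≤ x) :
    0 ≤ G (x + 1) - G x ∧ G (x + 1) - G x ≤ (D x)⁻¹ := by
  obtain ⟨c, hc, hceq⟩ := exists_hasDerivAt_eq_slope G (fun y => (D y)⁻¹)
    (by linarith : x < x + 1)
    (fun y hy => (hasDerivAt_G (le_trans hx hy.1)).continuousAt.continuousWithinAt)
    (fun y hy => hasDerivAt_G (le_trans hx hy.1.le))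
  have hceq' : G (x + 1) - G x = (D c)⁻¹ := by
    have h1 : x + 1 - x = 1 := by ring
    rw [h1, div_one] at hceq
    exact hceq.symm
  have hcee : ee ≤ c := le_trans hx hc.1.le
  constructor
  · rw [hceq']
    exact inv_nonneg.2 (D_pos hcee).le
  · rw [hceq']
    exact inv_anti₀ (D_pos hx) (D_mono hx hc.1.le)

lemma tendsto_G : Tendsto G atTop atTop :=
  Real.tendsto_log_atTop.comp (Real.tendsto_log_atTop.comp
    (Real.tendsto_log_atTop.comp Real.tendsto_log_atTop))

lemma ev_ee : ∀ᶠ i : ℕ in atTop, ee ≤ (i : ℝ) :=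
  tendsto_natCast_atTop_atTop.eventually_ge_atTop ee

lemma log_two_le_one : Real.log 2 ≤ 1 := by
  have h2 : (2:ℝ) ≤ Real.exp 1 := by have := Real.add_one_le_exp (1:ℝ); linarith
  have := Real.log_le_log (by norm_num : (0:ℝ) < 2) h2
  rwa [Real.log_exp] at this

/-- Main real-analytic estimate. -/
lemma pb_bound {α ρ : ℝ} (hα : 0 < α) (hρ : ρ < 0) {i M : ℝ}
    (hi : ee ≤ i) (hiM : i ≤ M) (hM2 : M ≤ 2 * i) :
    (1 / 16) * (D i)⁻¹ ≤
      (max (M ^ (1 / α) * Real.log M ^ (1 / α) * Real.log (Real.log M) ^ (1 / α) *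
        Real.log (Real.log (Real.log M)) ^ (1 / α + ρ)) 1) ^ (-α) := by
  have hMee : ee ≤ M := le_trans hi hiM
  have hDi : 0 < D i := D_pos hi
  set pb := M ^ (1 / α) * Real.log M ^ (1 / α) * Real.log (Real.log M) ^ (1 / α) *
    Real.log (Real.log (Real.log M)) ^ (1 / α + ρ) with hpb
  rcases le_total pb 1 with hcase | hcase
  · rw [max_eq_right hcase, Real.one_rpow]
    have h1 : (D i)⁻¹ ≤ 1 := inv_le_one_of_one_le₀ (one_le_D hi)
    nlinarith [inv_nonneg.2 hDi.le]
  · rw [max_eq_left hcase]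
    -- positivity facts about M
    have hM0 : (0:ℝ) < M := lt_trans one_pos (one_lt_x hMee)
    have hlM : (0:ℝ) < Real.log M := lt_trans one_pos (one_lt_log hMee)
    have hllM : (0:ℝ) < Real.log (Real.log M) := lt_trans one_pos (one_lt_loglog hMee)
    have hlllM : (1:ℝ) ≤ Real.log (Real.log (Real.log M)) := logloglog_ee_le hMee
    have hαne : α ≠ 0 := hα.ne'
    -- pb ^ (-α) = M⁻¹ * (log M)⁻¹ * (log log M)⁻¹ * t ^ ((1/α + ρ) * (-α))
    have hexpand : pb ^ (-α) =
        M⁻¹ * (Real.log M)⁻¹ * (Real.log (Real.log M))⁻¹ *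
          Real.log (Real.log (Real.log M)) ^ ((1 / α + ρ) * (-α)) := by
      rw [hpb, Real.mul_rpow (by positivity) (by positivity),
        Real.mul_rpow (by positivity) (by positivity),
        Real.mul_rpow (by positivity) (by positivity),
        ← Real.rpow_mul hM0.le, ← Real.rpow_mul hlM.le, ← Real.rpow_mul hllM.le,
        ← Real.rpow_mul (by linarith : (0:ℝ) ≤ Real.log (Real.log (Real.log M)))]
      have h1 : 1 / α * (-α) = -1 := by field_simp
      rw [h1, Real.rpow_neg_one, Real.rpow_neg_one, Real.rpow_neg_one]
    have hexp2 : Real.log (Real.log (Real.log M)) ^ (-1 : ℝ) ≤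
        Real.log (Real.log (Real.log M)) ^ ((1 / α + ρ) * (-α)) := by
      apply Real.rpow_le_rpow_of_exponent_le hlllM
      have : (1 / α + ρ) * (-α) = -1 - ρ * α := by field_simp; ring
      rw [this]
      nlinarith [mul_pos hα (neg_pos.2 hρ)]
    have hDM : (D M)⁻¹ ≤ pb ^ (-α) := by
      rw [hexpand, D, mul_inv, mul_inv, mul_inv]
      calc M⁻¹ * (Real.log M)⁻¹ * (Real.log (Real.log M))⁻¹ *
            (Real.log (Real.log (Real.log M)))⁻¹
          = M⁻¹ * (Real.log M)⁻¹ * (Real.log (Real.log M))⁻¹ *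
            Real.log (Real.log (Real.log M)) ^ (-1 : ℝ) := by rw [Real.rpow_neg_one]
        _ ≤ M⁻¹ * (Real.log M)⁻¹ * (Real.log (Real.log M))⁻¹ *
            Real.log (Real.log (Real.log M)) ^ ((1 / α + ρ) * (-α)) := by
            apply mul_le_mul_of_nonneg_left hexp2
            positivity
    -- D M ≤ 16 * D i
    have hi1 : (1:ℝ) ≤ Real.log i := (one_lt_log hi).le
    have hi2 : (1:ℝ) ≤ Real.log (Real.log i) := (one_lt_loglog hi).le
    have hi3 : (1:ℝ) ≤ Real.log (Real.log (Real.log i)) := logloglog_ee_le hi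
    have hi0 : (0:ℝ) < i := lt_trans one_pos (one_lt_x hi)
    have hl2 : Real.log 2 ≤ 1 := log_two_le_one
    have hlogM : Real.log M ≤ 2 * Real.log i := by
      calc Real.log M ≤ Real.log (2 * i) := log_mono hMee hM2
        _ = Real.log 2 + Real.log i := Real.log_mul (by norm_num) hi0.ne'
        _ ≤ 2 * Real.log i := by linarith
    have hloglogM : Real.log (Real.log M) ≤ 2 * Real.log (Real.log i) := by
      calc Real.log (Real.log M) ≤ Real.log (2 * Real.log i) :=
            Real.log_le_log hlM hlogM
        _ = Real.log 2 + Real.log (Real.log i) := Real.log_mul (by norm_num) (by linarith)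
        _ ≤ 2 * Real.log (Real.log i) := by linarith
    have hlogloglogM : Real.log (Real.log (Real.log M)) ≤
        2 * Real.log (Real.log (Real.log i)) := by
      calc Real.log (Real.log (Real.log M)) ≤ Real.log (2 * Real.log (Real.log i)) :=
            Real.log_le_log hllM hloglogM
        _ = Real.log 2 + Real.log (Real.log (Real.log i)) :=
            Real.log_mul (by norm_num) (by linarith)
        _ ≤ 2 * Real.log (Real.log (Real.log i)) := by linarith
    have hDM16 : D M ≤ 16 * D i := by
      have ha : M * Real.log M ≤ (2 * i) * (2 * Real.log i) :=
        mul_le_mul hM2 hlogM hlM.le (by positivity)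
      have hb : M * Real.log M * Real.log (Real.log M) ≤
          (2 * i) * (2 * Real.log i) * (2 * Real.log (Real.log i)) :=
        mul_le_mul ha hloglogM hllM.le (by positivity)
      have hc : M * Real.log M * Real.log (Real.log M) *
          Real.log (Real.log (Real.log M)) ≤
          (2 * i) * (2 * Real.log i) * (2 * Real.log (Real.log i)) *
            (2 * Real.log (Real.log (Real.log i))) :=
        mul_le_mul hb hlogloglogM (by linarith) (by positivity)
      calc D M = M * Real.log M * Real.log (Real.log M) *
            Real.log (Real.log (Real.log M)) := rfl
        _ ≤ (2 * i) * (2 * Real.log i) * (2 * Real.log (Real.log i)) *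
            (2 * Real.log (Real.log (Real.log i))) := hc
        _ = 16 * D i := by rw [D]; ring
    have h16 : (16 * D i)⁻¹ ≤ (D M)⁻¹ := inv_anti₀ (D_pos hMee) hDM16
    calc (1 / 16) * (D i)⁻¹ = (16 * D i)⁻¹ := by
          rw [mul_inv]; ring
      _ ≤ (D M)⁻¹ := h16
      _ ≤ pb ^ (-α) := hDM

end ParetoAux

open ParetoAux in
theorem pareto_max_lower_bound_sparse_subsequence
    {Ω : Type*} [MeasureSpace Ω] [IsProbabilityMeasure (ℙ : Measure Ω)]
    (α ρ : ℝ) (hα : 0 < α) (hρ : ρ < 0)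
    (X : ℕ → Ω → ℝ) (hmeas : ∀ i, Measurable (X i))
    (hindep : iIndepFun X ℙ)
    (hdist : ∀ i, ∀ x : ℝ, 1 ≤ x → ℙ {ω | x < X i ω} = ENNReal.ofReal (x ^ (-α)))
    (n : ℕ → ℕ) (hmono : StrictMono n)
    (η : ℝ) (hη : η ∈ Set.Ioo (0 : ℝ) 1)
    (hsparse : ∀ᶠ k : ℕ in atTop, ((n (k + 1) : ℝ) - n k) < (n k : ℝ) ^ η) :
    ∀ᵐ ω ∂ℙ, ∃ᶠ k : ℕ in atTop, ∃ i ∈ Finset.Icc 1 (n k), paretoBound α ρ (n k) ≤ X i ω := by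
  classical
  -- first index k with i ≤ n k
  have hex : ∀ i : ℕ, ∃ k, i ≤ n k := fun i => ⟨i, hmono.le_apply⟩
  set K : ℕ → ℕ := fun i => Nat.find (hex i) with hKdef
  have hK : ∀ i, i ≤ n (K i) := fun i => Nat.find_spec (hex i)
  have hKmin : ∀ i k, k < K i → n k < i := fun i k hk => not_le.1 (Nat.find_min (hex i) hk)
  have hKgt : ∀ i k0, n k0 < i → k0 < K i := by
    intro i k0 h
    by_contra h'
    push_neg at h'
    exact absurd (le_trans (hK i) (hmono.monotone h')) (not_le.2 h)
  set w : ℕ → ℝ := fun i => max (paretoBound α ρ (n (K i))) 1 with hwdef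
  set C : ℕ → Set Ω := fun i => {ω | w i < X i ω} with hCdef
  have hCmeas : ∀ i, MeasurableSet (C i) := fun i => hmeas i measurableSet_Ioi
  have hCindep : iIndepSet C ℙ := by
    rw [iIndepSet_iff_meas_biInter hCmeas]
    intro s
    exact hindep.meas_biInter fun i _ => ⟨Set.Ioi (w i), measurableSet_Ioi, rfl⟩
  have hprob : ∀ i, ℙ (C i) = ENNReal.ofReal (w i ^ (-α)) := fun i =>
    hdist i (w i) (le_max_right _ _)
  -- sparsity consequence
  obtain ⟨k1, hk1⟩ := eventually_atTop.mp hsparse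
  have hM2 : ∀ i : ℕ, n k1 < i → 1 ≤ i → (n (K i) : ℝ) ≤ 2 * i := by
    intro i h1 h2
    have hKi : k1 < K i := hKgt i k1 h1
    have hkpos : 0 < K i := lt_of_le_of_lt (Nat.zero_le _) hKi
    have hKi1 : K i - 1 + 1 = K i := Nat.succ_pred_eq_of_pos hkpos
    have hk1k : k1 ≤ K i - 1 := by omega
    have hnk : n (K i - 1) < i := hKmin i (K i - 1) (by omega)
    have hs := hk1 (K i - 1) hk1k
    rw [hKi1] at hs
    have hnkr : ((n (K i - 1) : ℕ) : ℝ) ≤ (i : ℝ) := by exact_mod_cast hnk.le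
    have h1' : ((n (K i - 1) : ℕ) : ℝ) ^ η ≤ (i : ℝ) ^ η :=
      Real.rpow_le_rpow (Nat.cast_nonneg _) hnkr hη.1.le
    have h2' : (i : ℝ) ^ η ≤ (i : ℝ) := by
      calc (i : ℝ) ^ η ≤ (i : ℝ) ^ (1 : ℝ) :=
            Real.rpow_le_rpow_of_exponent_le (by exact_mod_cast h2) hη.2.le
        _ = i := Real.rpow_one _
    linarith
  -- eventual term-wise lower bound on ℙ (C i)
  have hev : ∀ᶠ i : ℕ in atTop, ee ≤ (i : ℝ) ∧ n k1 < i ∧ 1 ≤ i := by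
    filter_upwards [ev_ee, eventually_gt_atTop (n k1), eventually_ge_atTop 1] with i h1 h2 h3
    exact ⟨h1, h2, h3⟩
  obtain ⟨N0, hN0⟩ := eventually_atTop.mp hev
  have hterm : ∀ i, N0 ≤ i →
      ENNReal.ofReal ((1 / 16) * (G ((i : ℝ) + 1) - G i)) ≤ ℙ (C i) := by
    intro i hi
    obtain ⟨heei, hnk1i, h1i⟩ := hN0 i hi
    have hM1 : (i : ℝ) ≤ ((n (K i) : ℕ) : ℝ) := by exact_mod_cast hK i
    have hM2' := hM2 i hnk1i h1i
    have hkey := pb_bound hα hρ heei hM1 hM2'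
    obtain ⟨hpos, hsl⟩ := slope_bound heei
    rw [hprob i]
    apply ENNReal.ofReal_le_ofReal
    have hmul : (1 / 16 : ℝ) * (G ((i : ℝ) + 1) - G i) ≤ (1 / 16) * (D i)⁻¹ :=
      mul_le_mul_of_nonneg_left hsl (by norm_num)
    calc (1 / 16 : ℝ) * (G ((i : ℝ) + 1) - G i) ≤ (1 / 16) * (D (i : ℝ))⁻¹ := hmul
      _ ≤ w i ^ (-α) := by
          rw [hwdef]
          simp only [paretoBound]
          exact hkey
  -- divergence of the sum
  have hsum : (∑' i, ℙ (C i)) = ⊤ := by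
    apply ENNReal.eq_top_of_forall_nnreal_le
    intro r
    have hGt : Tendsto (fun N : ℕ => (1 / 16 : ℝ) * (G N - G N0)) atTop atTop := by
      apply Tendsto.const_mul_atTop (by norm_num : (0:ℝ) < 1 / 16)
      exact tendsto_atTop_add_const_right _ _ (tendsto_G.comp tendsto_natCast_atTop_atTop)
    obtain ⟨N, hNr, hNN0⟩ :=
      ((hGt.eventually_ge_atTop (r : ℝ)).and (eventually_ge_atTop N0)).exists
    have htel : ∑ i ∈ Finset.Ico N0 N, (G ((i : ℝ) + 1) - G i) = G (N : ℝ) - G (N0 : ℝ) := by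
      have h1 : ∀ m : ℕ, ∑ i ∈ Finset.range m, (G ((i : ℝ) + 1) - G i)
          = G (m : ℝ) - G ((0 : ℕ) : ℝ) := by
        intro m
        have := Finset.sum_range_sub (fun j : ℕ => G (j : ℝ)) m
        simpa [Nat.cast_succ] using this
      rw [Finset.sum_Ico_eq_sub _ hNN0, h1, h1]
      ring
    calc (r : ℝ≥0∞) = ENNReal.ofReal (r : ℝ) := ENNReal.ofReal_coe_nnreal.symm
      _ ≤ ENNReal.ofReal ((1 / 16) * (G (N : ℝ) - G (N0 : ℝ))) :=
          ENNReal.ofReal_le_ofReal hNr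
      _ = ENNReal.ofReal (∑ i ∈ Finset.Ico N0 N, (1 / 16) * (G ((i : ℝ) + 1) - G i)) := by
          rw [← Finset.mul_sum, htel]
      _ = ∑ i ∈ Finset.Ico N0 N, ENNReal.ofReal ((1 / 16) * (G ((i : ℝ) + 1) - G i)) := by
          apply ENNReal.ofReal_sum_of_nonneg
          intro i hi
          have hiN0 : N0 ≤ i := (Finset.mem_Ico.1 hi).1
          obtain ⟨heei, -, -⟩ := hN0 i hiN0
          have := (slope_bound heei).1
          positivity
      _ ≤ ∑ i ∈ Finset.Ico N0 N, ℙ (C i) :=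
          Finset.sum_le_sum fun i hi => hterm i (Finset.mem_Ico.1 hi).1
      _ ≤ ∑' i, ℙ (C i) := ENNReal.sum_le_tsum _
  -- second Borel–Cantelli
  have hone : ℙ (limsup C atTop) = 1 := measure_limsup_eq_one hCmeas hCindep hsum
  have hae : ∀ᵐ ω ∂ℙ, ω ∈ limsup C atTop := by
    have hcompl : ℙ (limsup C atTop)ᶜ = 0 :=
      (prob_compl_eq_zero_iff (MeasurableSet.measurableSet_limsup hCmeas)).2 hone
    rw [ae_iff]
    exact hcompl
  filter_upwards [hae] with ω hω
  rw [Filter.mem_limsup_iff_frequently_mem] at hω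
  rw [frequently_atTop]
  intro k0
  obtain ⟨i, hi, hiC⟩ := frequently_atTop.mp hω (max 1 (n k0 + 1))
  have hi1 : 1 ≤ i := le_trans (le_max_left _ _) hi
  have hik0 : n k0 < i := lt_of_lt_of_le (Nat.lt_succ_self _) (le_trans (le_max_right _ _) hi)
  refine ⟨K i, (hKgt i k0 hik0).le, i, Finset.mem_Icc.2 ⟨hi1, hK i⟩, ?_⟩
  exact le_trans (le_max_left _ _) (le_of_lt hiC)
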